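/- Let U, W, Z, A be random variables on a finite probability space with Z, A binary, satisfying: (a) 0 < P(Z=1|W) < 1 a.s.; (b) U ⫫ Z | W; (c) E[A|U,W,Z=1] − E[A|U,W,Z=0] = δ(W) a.s. for a function δ of W with δ(W) ≠ 0 a.s. Then for each a ∈ {0,1}: E[ (−1)^{1−Z} 1{A=a} / P(Z|W) | U, W ] = (−1)^{1−a} δ(W) almost surely. In particular this conditional expectation does not depend on U. -/

import Mathlib

open Finset
open scoped Classical BigOperators

noncomputable section

variable {Ω : Type}

/-- Expectation of `f` under pmf `p` on a finite sample space. -/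
def E [Fintype Ω] (p f : Ω → ℝ) : ℝ := ∑ ω, p ω * f ω

/-- Probability of the event `s` under pmf `p`. -/
def Pr [Fintype Ω] (p : Ω → ℝ) (s : Ω → Prop) : ℝ := ∑ ω, if s ω then p ω else 0

/-- Conditional expectation of `f` given the event `s`. -/
def CE [Fintype Ω] (p f : Ω → ℝ) (s : Ω → Prop) : ℝ :=
  (∑ ω, if s ω then p ω * f ω else 0) / Pr p s

/-- The realized instrument propensity P(Z = Z(ω) | W = W(ω)). -/
def PZ {β : Type} [Fintype Ω] (p : Ω → ℝ) (W : Ω → β) (Z : Ω → ℝ) (ω : Ω) : ℝ :=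
  Pr p (fun ω' => W ω' = W ω ∧ Z ω' = Z ω) / Pr p (fun ω' => W ω' = W ω)

/-- The sign (−1)^{1−X(ω)} for a {0,1}-valued variable X. -/
def sgn (X : Ω → ℝ) (ω : Ω) : ℝ := if X ω = 1 then 1 else -1


/-- `ite` with the classical decidability instance, matching the instances
produced by unfolding `Pr` and `CE`. -/
def iteP (c : Prop) (x : ℝ) : ℝ := if c then x else 0

lemma iteP_pos {c : Prop} (h : c) (x : ℝ) : iteP c x = x := if_pos h

lemma iteP_neg {c : Prop} (h : ¬c) (x : ℝ) : iteP c x = 0 := if_neg h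

lemma Pr_congr' [Fintype Ω] (p : Ω → ℝ) {s t : Ω → Prop} (h : ∀ ω, s ω ↔ t ω) :
    Pr p s = Pr p t := by
  unfold Pr
  exact Finset.sum_congr rfl fun ω _ => by rw [iff_iff_eq.mp (h ω)]

/-- The weighting identity conditional on the unmeasured confounder U:
E[(−1)^{1−Z} 1{A=a}/P(Z|W) | U, W] = (−1)^{1−a} δ(W) a.s., free of U. -/
theorem stmt3 {β γ : Type} [Fintype Ω]
    (p : Ω → ℝ) (hp0 : ∀ ω, 0 ≤ p ω) (hp1 : ∑ ω, p ω = 1)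
    (A Z : Ω → ℝ) (U : Ω → γ) (W : Ω → β)
    (hA : ∀ ω, A ω = 0 ∨ A ω = 1) (hZ : ∀ ω, Z ω = 0 ∨ Z ω = 1)
    -- (a) positivity
    (hposW : ∀ ω, 0 < p ω → 0 < Pr p (fun ω' => W ω' = W ω))
    (hposWZ : ∀ ω, 0 < p ω → ∀ z : ℝ, z = 0 ∨ z = 1 →
      0 < Pr p (fun ω' => W ω' = W ω ∧ Z ω' = z))
    (hposUW : ∀ ω, 0 < p ω → 0 < Pr p (fun ω' => U ω' = U ω ∧ W ω' = W ω))
    (hposUWZ : ∀ ω, 0 < p ω → ∀ z : ℝ, z = 0 ∨ z = 1 →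
      0 < Pr p (fun ω' => U ω' = U ω ∧ W ω' = W ω ∧ Z ω' = z))
    -- (b) U ⫫ Z | W
    (hUZ : ∀ (u : γ) (z : ℝ) (w : β),
      Pr p (fun ω => U ω = u ∧ Z ω = z ∧ W ω = w) * Pr p (fun ω => W ω = w)
        = Pr p (fun ω => U ω = u ∧ W ω = w) * Pr p (fun ω => Z ω = z ∧ W ω = w))
    -- (c) independent compliance type
    (δ : β → ℝ)
    (hδ : ∀ ω, 0 < p ω →
      CE p A (fun ω' => U ω' = U ω ∧ W ω' = W ω ∧ Z ω' = 1)
        - CE p A (fun ω' => U ω' = U ω ∧ W ω' = W ω ∧ Z ω' = 0) = δ (W ω))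
    (hδne : ∀ ω, 0 < p ω → δ (W ω) ≠ 0) :
    ∀ ω, 0 < p ω → ∀ a : ℝ, a = 0 ∨ a = 1 →
      CE p (fun ω' => sgn Z ω' * (if A ω' = a then 1 else 0) / PZ p W Z ω')
        (fun ω' => U ω' = U ω ∧ W ω' = W ω)
        = (if a = 1 then (1 : ℝ) else -1) * δ (W ω) := by
  intro ω hω a ha
  have hQ : 0 < Pr p (fun ω' => W ω' = W ω) := hposW ω hω
  have hq1 : 0 < Pr p (fun ω' => W ω' = W ω ∧ Z ω' = (1:ℝ)) := hposWZ ω hω 1 (Or.inr rfl)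
  have hq0 : 0 < Pr p (fun ω' => W ω' = W ω ∧ Z ω' = (0:ℝ)) := hposWZ ω hω 0 (Or.inl rfl)
  have hPS : 0 < Pr p (fun ω' => U ω' = U ω ∧ W ω' = W ω) := hposUW ω hω
  have hP1 : 0 < Pr p (fun ω' => U ω' = U ω ∧ W ω' = W ω ∧ Z ω' = (1:ℝ)) :=
    hposUWZ ω hω 1 (Or.inr rfl)
  have hP0 : 0 < Pr p (fun ω' => U ω' = U ω ∧ W ω' = W ω ∧ Z ω' = (0:ℝ)) :=
    hposUWZ ω hω 0 (Or.inl rfl)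
  set Q := Pr p (fun ω' => W ω' = W ω) with hQdef
  set q1 := Pr p (fun ω' => W ω' = W ω ∧ Z ω' = (1:ℝ)) with hq1def
  set q0 := Pr p (fun ω' => W ω' = W ω ∧ Z ω' = (0:ℝ)) with hq0def
  set PS := Pr p (fun ω' => U ω' = U ω ∧ W ω' = W ω) with hPSdef
  set P1 := Pr p (fun ω' => U ω' = U ω ∧ W ω' = W ω ∧ Z ω' = (1:ℝ)) with hP1def
  set P0 := Pr p (fun ω' => U ω' = U ω ∧ W ω' = W ω ∧ Z ω' = (0:ℝ)) with hP0def
  set m1 := CE p A (fun ω' => U ω' = U ω ∧ W ω' = W ω ∧ Z ω' = (1:ℝ)) with hm1def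
  set m0 := CE p A (fun ω' => U ω' = U ω ∧ W ω' = W ω ∧ Z ω' = (0:ℝ)) with hm0def
  have hQ' : Q ≠ 0 := ne_of_gt hQ
  have hq1' : q1 ≠ 0 := ne_of_gt hq1
  have hq0' : q0 ≠ 0 := ne_of_gt hq0
  have hPS' : PS ≠ 0 := ne_of_gt hPS
  -- conditional independence in usable form
  have hCI : ∀ z : ℝ,
      Pr p (fun ω' => U ω' = U ω ∧ W ω' = W ω ∧ Z ω' = z) * Q
        = PS * Pr p (fun ω' => W ω' = W ω ∧ Z ω' = z) := by
    intro z
    have e1 : Pr p (fun ω' => U ω' = U ω ∧ Z ω' = z ∧ W ω' = W ω)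
        = Pr p (fun ω' => U ω' = U ω ∧ W ω' = W ω ∧ Z ω' = z) :=
      Pr_congr' p (fun ω' => by tauto)
    have e2 : Pr p (fun ω' => Z ω' = z ∧ W ω' = W ω)
        = Pr p (fun ω' => W ω' = W ω ∧ Z ω' = z) :=
      Pr_congr' p (fun ω' => by tauto)
    have h := hUZ (U ω) z (W ω)
    rw [e1, e2] at h
    exact h
  have hCI1 : P1 * Q = PS * q1 := hCI 1
  have hCI0 : P0 * Q = PS * q0 := hCI 0
  -- the events, as probabilities written with `iteP`
  have hPr1 : P1 = ∑ ω', iteP (U ω' = U ω ∧ W ω' = W ω ∧ Z ω' = (1:ℝ)) (p ω') := by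
    rw [hP1def]; unfold Pr; simp only [iteP]
  have hPr0 : P0 = ∑ ω', iteP (U ω' = U ω ∧ W ω' = W ω ∧ Z ω' = (0:ℝ)) (p ω') := by
    rw [hP0def]; unfold Pr; simp only [iteP]
  -- numerators of the conditional means
  have hEA1 : (∑ ω', iteP (U ω' = U ω ∧ W ω' = W ω ∧ Z ω' = (1:ℝ)) (p ω' * A ω'))
      = m1 * P1 := by
    rw [hm1def]; unfold CE
    rw [← hP1def, div_mul_cancel₀ _ (ne_of_gt hP1)]
    simp only [iteP]
  have hEA0 : (∑ ω', iteP (U ω' = U ω ∧ W ω' = W ω ∧ Z ω' = (0:ℝ)) (p ω' * A ω'))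
      = m0 * P0 := by
    rw [hm0def]; unfold CE
    rw [← hP0def, div_mul_cancel₀ _ (ne_of_gt hP0)]
    simp only [iteP]
  -- abbreviate the integrand
  set f : Ω → ℝ := fun ω' => sgn Z ω' * (if A ω' = a then 1 else 0) / PZ p W Z ω' with hfdef
  set ind : Ω → ℝ := fun ω' => if A ω' = a then 1 else 0 with hinddef
  set T1 := ∑ ω', iteP (U ω' = U ω ∧ W ω' = W ω ∧ Z ω' = (1:ℝ)) (p ω' * ind ω') with hT1def
  set T0 := ∑ ω', iteP (U ω' = U ω ∧ W ω' = W ω ∧ Z ω' = (0:ℝ)) (p ω' * ind ω') with hT0def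
  -- split the numerator by the value of Z and pull out the constants
  have hnum : (∑ ω', iteP (U ω' = U ω ∧ W ω' = W ω) (p ω' * f ω'))
      = (Q / q1) * T1 - (Q / q0) * T0 := by
    have split : ∀ ω', iteP (U ω' = U ω ∧ W ω' = W ω) (p ω' * f ω')
        = iteP (U ω' = U ω ∧ W ω' = W ω ∧ Z ω' = (1:ℝ)) (p ω' * f ω')
          + iteP (U ω' = U ω ∧ W ω' = W ω ∧ Z ω' = (0:ℝ)) (p ω' * f ω') := by
      intro ω'
      rcases hZ ω' with hz | hz <;>
        by_cases hs : U ω' = U ω ∧ W ω' = W ω <;>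
          simp [iteP, hs, hz]
    have f1 : ∀ ω', iteP (U ω' = U ω ∧ W ω' = W ω ∧ Z ω' = (1:ℝ)) (p ω' * f ω')
        = (Q / q1) * iteP (U ω' = U ω ∧ W ω' = W ω ∧ Z ω' = (1:ℝ)) (p ω' * ind ω') := by
      intro ω'
      by_cases h : U ω' = U ω ∧ W ω' = W ω ∧ Z ω' = (1:ℝ)
      · rw [iteP_pos h, iteP_pos h]
        have hPZ : PZ p W Z ω' = q1 / Q := by
          unfold PZ
          rw [h.2.1, h.2.2, ← hq1def, ← hQdef]
        have hsgn : sgn Z ω' = 1 := by rw [sgn, if_pos h.2.2]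
        simp only [hfdef, hinddef]
        rw [hPZ, hsgn]
        field_simp
      · rw [iteP_neg h, iteP_neg h, mul_zero]
    have f0 : ∀ ω', iteP (U ω' = U ω ∧ W ω' = W ω ∧ Z ω' = (0:ℝ)) (p ω' * f ω')
        = -((Q / q0) * iteP (U ω' = U ω ∧ W ω' = W ω ∧ Z ω' = (0:ℝ)) (p ω' * ind ω')) := by
      intro ω'
      by_cases h : U ω' = U ω ∧ W ω' = W ω ∧ Z ω' = (0:ℝ)
      · rw [iteP_pos h, iteP_pos h]
        have hPZ : PZ p W Z ω' = q0 / Q := by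
          unfold PZ
          rw [h.2.1, h.2.2, ← hq0def, ← hQdef]
        have hsgn : sgn Z ω' = -1 := by
          rw [sgn, if_neg]
          rw [h.2.2]; norm_num
        simp only [hfdef, hinddef]
        rw [hPZ, hsgn]
        field_simp
      · rw [iteP_neg h, iteP_neg h, mul_zero, neg_zero]
    calc (∑ ω', iteP (U ω' = U ω ∧ W ω' = W ω) (p ω' * f ω'))
        = ∑ ω', (iteP (U ω' = U ω ∧ W ω' = W ω ∧ Z ω' = (1:ℝ)) (p ω' * f ω')
            + iteP (U ω' = U ω ∧ W ω' = W ω ∧ Z ω' = (0:ℝ)) (p ω' * f ω')) :=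
          Finset.sum_congr rfl fun ω' _ => split ω'
      _ = (∑ ω', iteP (U ω' = U ω ∧ W ω' = W ω ∧ Z ω' = (1:ℝ)) (p ω' * f ω'))
            + (∑ ω', iteP (U ω' = U ω ∧ W ω' = W ω ∧ Z ω' = (0:ℝ)) (p ω' * f ω')) :=
          Finset.sum_add_distrib
      _ = (∑ ω', (Q / q1) * iteP (U ω' = U ω ∧ W ω' = W ω ∧ Z ω' = (1:ℝ)) (p ω' * ind ω'))
            + (∑ ω', -((Q / q0) * iteP (U ω' = U ω ∧ W ω' = W ω ∧ Z ω' = (0:ℝ)) (p ω' * ind ω'))) := by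
          rw [Finset.sum_congr rfl fun ω' _ => f1 ω', Finset.sum_congr rfl fun ω' _ => f0 ω']
      _ = (Q / q1) * T1 - (Q / q0) * T0 := by
          rw [Finset.sum_neg_distrib, ← Finset.mul_sum, ← Finset.mul_sum, hT1def, hT0def]
          ring
  -- turn the goal into a statement about the numerator
  have hδw : m1 - m0 = δ (W ω) := hδ ω hω
  unfold CE
  rw [← hPSdef]
  simp only [iteP] at hnum
  rw [hnum]
  rcases ha with ha | ha
  · -- a = 0 : the indicator is 1 - A
    subst ha
    have hT1 : T1 = P1 - m1 * P1 := by
      rw [hT1def, ← hEA1, hPr1, ← Finset.sum_sub_distrib]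
      refine Finset.sum_congr rfl fun ω' _ => ?_
      by_cases h : U ω' = U ω ∧ W ω' = W ω ∧ Z ω' = (1:ℝ)
      · rw [iteP_pos h, iteP_pos h, iteP_pos h]
        simp only [hinddef]
        rcases hA ω' with h' | h' <;> simp [h']
      · rw [iteP_neg h, iteP_neg h, iteP_neg h, sub_zero]
    have hT0 : T0 = P0 - m0 * P0 := by
      rw [hT0def, ← hEA0, hPr0, ← Finset.sum_sub_distrib]
      refine Finset.sum_congr rfl fun ω' _ => ?_
      by_cases h : U ω' = U ω ∧ W ω' = W ω ∧ Z ω' = (0:ℝ)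
      · rw [iteP_pos h, iteP_pos h, iteP_pos h]
        simp only [hinddef]
        rcases hA ω' with h' | h' <;> simp [h']
      · rw [iteP_neg h, iteP_neg h, iteP_neg h, sub_zero]
    rw [hT1, hT0, if_neg (by norm_num : ¬(0:ℝ) = 1)]
    rw [div_eq_iff hPS']
    field_simp
    linear_combination ((1 - m1) * q0) * hCI1 - ((1 - m0) * q1) * hCI0 - (PS * q1 * q0) * hδw
  · -- a = 1 : the indicator is A
    subst ha
    have hT1 : T1 = m1 * P1 := by
      rw [hT1def, ← hEA1]
      refine Finset.sum_congr rfl fun ω' _ => ?_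
      by_cases h : U ω' = U ω ∧ W ω' = W ω ∧ Z ω' = (1:ℝ)
      · rw [iteP_pos h, iteP_pos h]
        simp only [hinddef]
        rcases hA ω' with h' | h' <;> simp [h']
      · rw [iteP_neg h, iteP_neg h]
    have hT0 : T0 = m0 * P0 := by
      rw [hT0def, ← hEA0]
      refine Finset.sum_congr rfl fun ω' _ => ?_
      by_cases h : U ω' = U ω ∧ W ω' = W ω ∧ Z ω' = (0:ℝ)
      · rw [iteP_pos h, iteP_pos h]
        simp only [hinddef]
        rcases hA ω' with h' | h' <;> simp [h']
      · rw [iteP_neg h, iteP_neg h]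
    rw [hT1, hT0, if_pos rfl]
    rw [div_eq_iff hPS']
    field_simp
    linear_combination (m1 * q0) * hCI1 - (m0 * q1) * hCI0 + (PS * q1 * q0) * hδw
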